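/- Let Λ ⊂ 𝔻 be a subset of the open unit disk with an accumulation point inside 𝔻. Then the linear span of the geometric sequences {(λᵏ)ₖ : λ ∈ Λ} is dense in ℓ¹(ℕ). -/

import Mathlib

open Metric

-- Auxiliary: a submodule is dense if every continuous functional vanishing on it is zero.
lemma dense_of_dual_vanish {E : Type*} [NormedAddCommGroup E] [NormedSpace ℂ E]
    (p : Submodule ℂ E) (h : ∀ φ : E →L[ℂ] ℂ, (∀ x ∈ p, φ x = 0) → φ = 0) :
    Dense (p : Set E) := by
  rw [Submodule.dense_iff_topologicalClosure_eq_top]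
  by_contra hne
  obtain ⟨x, hx⟩ : ∃ x : E, x ∉ p.topologicalClosure := by
    by_contra hall
    push_neg at hall
    exact hne (Submodule.eq_top_iff'.2 hall)
  set q := p.topologicalClosure with hq
  haveI : IsClosed (q : Set E) := Submodule.isClosed_topologicalClosure p
  have hxq : (Submodule.Quotient.mk x : E ⧸ q) ≠ 0 := by
    simpa [Submodule.Quotient.mk_eq_zero] using hx
  obtain ⟨g, hg1, hgx⟩ := exists_dual_vector ℂ (Submodule.Quotient.mk x : E ⧸ q) (norm_ne_zero_iff.2 hxq)
  have hmkle : ∀ y : E, ‖(Submodule.Quotient.mk y : E ⧸ q)‖ ≤ 1 * ‖y‖ := fun y => by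
    simpa using Submodule.Quotient.norm_mk_le q y
  let mkC : E →L[ℂ] E ⧸ q := (q.mkQ).mkContinuous 1 hmkle
  have hφ : g.comp mkC = 0 := by
    apply h
    intro y hy
    have : (Submodule.Quotient.mk y : E ⧸ q) = 0 :=
      (Submodule.Quotient.mk_eq_zero q).2 (Submodule.le_topologicalClosure p hy)
    simp [mkC, ContinuousLinearMap.comp_apply, LinearMap.mkContinuous_apply,
      Submodule.mkQ_apply, this]
    exact (show g (Submodule.Quotient.mk y) = 0 by rw [this, map_zero])
  have : g (Submodule.Quotient.mk x : E ⧸ q) = 0 := by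
    have := congrArg (fun f : E →L[ℂ] ℂ => f x) hφ
    simp [mkC] at this
    exact this
  rw [hgx] at this
  have hnorm : ‖(Submodule.Quotient.mk x : E ⧸ q)‖ = 0 := by
    simpa using congrArg Complex.re this
  exact hxq (norm_eq_zero.1 hnorm)

theorem dense_span_geometric (Λ : Set ℂ) (hΛ : Λ ⊆ ball (0:ℂ) 1)
    (hacc : ∃ z ∈ ball (0:ℂ) 1, AccPt z (Filter.principal Λ)) :
    Dense (↑(Submodule.span ℂ
      {f : lp (fun _ : ℕ => ℂ) 1 | ∃ l ∈ Λ, ∀ k : ℕ, f k = l ^ k}) : Set (lp (fun _ : ℕ => ℂ) 1)) := by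
  apply dense_of_dual_vanish
  intro φ hφ0
  -- coefficients of the dual functional
  set a : ℕ → ℂ := fun k => φ (lp.single 1 k (1 : ℂ)) with ha
  have hasingle : ∀ (k : ℕ) (c : ℂ), φ (lp.single 1 k c) = c * a k := by
    intro k c
    have : lp.single (E := fun _ : ℕ => ℂ) 1 k c = c • lp.single 1 k (1 : ℂ) := by
      rw [← lp.single_smul]; norm_num
    rw [this, map_smul, smul_eq_mul]
  have habd : ∀ k, ‖a k‖ ≤ ‖φ‖ := by
    intro k
    calc ‖a k‖ ≤ ‖φ‖ * ‖lp.single (E := fun _ : ℕ => ℂ) 1 k (1 : ℂ)‖ := φ.le_opNorm _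
    _ ≤ ‖φ‖ * 1 := by
        gcongr
        have := lp.norm_single (E := fun _ : ℕ => ℂ) (p := 1) (by norm_num)
          k (1 : ℂ)
        simp only [norm_one] at this
        rw [this]
    _ = ‖φ‖ := mul_one _
  -- the analytic function given by the coefficients
  set F : ℂ → ℂ := fun z => ∑' k, a k * z ^ k with hFdef
  have hsum : ∀ z : ℂ, ‖z‖ < 1 → HasSum (fun k => a k * z ^ k) (F z) := by
    intro z hz
    refine Summable.hasSum ?_
    refine Summable.of_norm_bounded (g := fun k => ‖φ‖ * ‖z‖ ^ k)
      ((summable_geometric_of_lt_one (norm_nonneg z) hz).mul_left _) ?_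
    intro k
    rw [norm_mul, norm_pow]
    exact mul_le_mul_of_nonneg_right (habd k) (by positivity)
  -- geometric sequences as elements of ℓ¹
  have hmem : ∀ l : ℂ, ‖l‖ < 1 → Memℓp (fun k : ℕ => l ^ k) 1 := by
    intro l hl
    apply memℓp_gen
    simp only [ENNReal.toReal_one, Real.rpow_one, norm_pow]
    exact summable_geometric_of_lt_one (norm_nonneg l) hl
  -- φ applied to a geometric sequence is F
  have hφgeom : ∀ (f : lp (fun _ : ℕ => ℂ) 1) (l : ℂ), ‖l‖ < 1 →
      (∀ k : ℕ, f k = l ^ k) → φ f = F l := by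
    intro f l hl hf
    have h1 : HasSum (fun k : ℕ => lp.single 1 k (f k)) f :=
      lp.hasSum_single (by norm_num) f
    have h2 : HasSum (fun k : ℕ => φ (lp.single 1 k (f k))) (φ f) :=
      φ.hasSum h1
    have h3 : HasSum (fun k : ℕ => a k * l ^ k) (φ f) := by
      refine h2.congr_fun fun k => ?_
      rw [hf k, hasingle, mul_comm]
    exact h3.unique (hsum l hl)
  -- F vanishes on Λ
  have hFΛ : ∀ l ∈ Λ, F l = 0 := by
    intro l hl
    have hl1 : ‖l‖ < 1 := by simpa [mem_ball_zero_iff] using hΛ hl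
    set f : lp (fun _ : ℕ => ℂ) 1 := ⟨(fun k : ℕ => l ^ k), hmem l hl1⟩ with hfd
    have hfk : ∀ k : ℕ, f k = l ^ k := fun k => rfl
    have hfmem : f ∈ Submodule.span ℂ
        {f : lp (fun _ : ℕ => ℂ) 1 | ∃ l ∈ Λ, ∀ k : ℕ, f k = l ^ k} :=
      Submodule.subset_span ⟨l, hl, hfk⟩
    rw [← hφgeom f l hl1 hfk]
    exact hφ0 f hfmem
  -- power series of F
  set pser : FormalMultilinearSeries ℂ ℂ ℂ :=
    fun n => ContinuousMultilinearMap.mkPiRing ℂ (Fin n) (a n) with hpser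
  have hpnorm : ∀ n, ‖pser n‖ = ‖a n‖ := by
    intro n
    rw [hpser]
    exact ContinuousMultilinearMap.norm_mkPiRing ..
  have hradius : 1 ≤ pser.radius := by
    refine ENNReal.le_of_forall_nnreal_lt fun r hr => ?_
    have hr1 : (r : ℝ) < 1 := by exact_mod_cast hr
    refine pser.le_radius_of_bound ‖φ‖ fun n => ?_
    rw [hpnorm]
    calc ‖a n‖ * (r : ℝ) ^ n ≤ ‖φ‖ * 1 := by
          refine mul_le_mul (habd n) ?_ (by positivity) (norm_nonneg φ)
          exact pow_le_one₀ r.coe_nonneg hr1.le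
    _ = ‖φ‖ := mul_one _
  have hFps : HasFPowerSeriesOnBall F pser 0 1 := by
    refine ⟨hradius, by norm_num, ?_⟩
    intro y hy
    have hy1 : ‖y‖ < 1 := by
      rw [EMetric.mem_ball, edist_zero_right] at hy
      rw [enorm_eq_nnnorm] at hy
      exact_mod_cast hy
    rw [zero_add]
    refine (hsum y hy1).congr_fun fun n => ?_
    show pser n (fun _ => y) = a n * y ^ n
    rw [hpser]
    simp [ContinuousMultilinearMap.mkPiRing_apply, Finset.prod_const, smul_eq_mul, mul_comm]
  -- F is zero on the unit ball by the identity principle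
  obtain ⟨z, hz, hzacc⟩ := hacc
  have han : AnalyticOnNhd ℂ F (ball (0:ℂ) 1) := by
    intro w hw
    have hw' : w ∈ Metric.eball (0:ℂ) 1 := by
      rw [Metric.mem_eball, edist_zero_right, enorm_eq_nnnorm]
      exact_mod_cast mem_ball_zero_iff.1 hw
    exact hFps.analyticAt_of_mem hw'
  have hfreq : ∃ᶠ w in nhdsWithin z {z}ᶜ, F w = 0 := by
    have h1 : ∃ᶠ w in nhds z, w ≠ z ∧ w ∈ Λ := (accPt_iff_frequently (x := z) (C := Λ)).1 hzacc
    have h2 : ∃ᶠ w in nhdsWithin z {z}ᶜ, w ∈ Λ := by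
      rw [frequently_nhdsWithin_iff]
      exact h1.mono fun w hw => ⟨hw.2, hw.1⟩
    exact h2.mono fun w hw => hFΛ w hw
  have hzero : Set.EqOn F 0 (ball (0:ℂ) 1) :=
    han.eqOn_zero_of_preconnected_of_frequently_eq_zero
      (convex_ball (0:ℂ) 1).isPreconnected hz hfreq
  -- conclude the coefficients vanish
  have hps0 : pser = 0 := by
    refine (hFps.hasFPowerSeriesAt).eq_zero_of_eventually ?_
    filter_upwards [isOpen_ball.mem_nhds (by simp : (0:ℂ) ∈ ball (0:ℂ) 1)] with w hw
    exact hzero hw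
  have ha0 : ∀ n, a n = 0 := by
    intro n
    have : pser.coeff n = 0 := by rw [hps0]; rfl
    rw [FormalMultilinearSeries.coeff, hpser] at this
    simpa [ContinuousMultilinearMap.mkPiRing_apply] using this
  -- hence φ = 0
  ext f
  have h1 : HasSum (fun k : ℕ => φ (lp.single 1 k (f k))) (φ f) :=
    φ.hasSum (lp.hasSum_single (by norm_num) f)
  have h2 : HasSum (fun _ : ℕ => (0:ℂ)) (φ f) := by
    refine h1.congr_fun fun k => ?_
    rw [hasingle, ha0, mul_zero]
  simpa using h2.unique hasSum_zero
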